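/- Pythagorean-like identity (Lemma 3.1): let α ∈ ℝ^Λ and suppose there exists θ(α) ∈ ℝ^Λ such that ∫_E f_{θ(α)} ψ_λ dμ = α_λ for all λ ∈ Λ. Then for any nonnegative integrable measurable function f on E with ∫_E f·|log f| dμ < ∞ and ∫_E f ψ_λ dμ = α_λ for all λ ∈ Λ, and for every θ ∈ ℝ^Λ, one has Δ(f; f_θ) = Δ(f; f_{θ(α)}) + Δ(f_{θ(α)}; f_θ). -/

import Mathlib

open MeasureTheory

/-- Pythagorean-like identity (Lemma 3.1): if `θ(α)` matches the moments `α` of the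
exponential family, then for any nonnegative integrable `f` with `∫ f·|log f| dμ < ∞`
and the same moments `α`, and for every `θ`,
`Δ(f; f_θ) = Δ(f; f_{θ(α)}) + Δ(f_{θ(α)}; f_θ)`. -/
theorem information_projection_pythagoras
    {E : Type*} [MeasurableSpace E] (μ : Measure E) [IsFiniteMeasure μ]
    {Λ : Type*} [Fintype Λ] [DecidableEq Λ] (ψ : Λ → E → ℝ)
    (hmeas : ∀ l, Measurable (ψ l))
    (hbdd : ∀ l, ∃ C : ℝ, ∀ x, |ψ l x| ≤ C)
    (horth : ∀ l k, ∫ x, ψ l x * ψ k x ∂μ = if l = k then (1 : ℝ) else 0)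
    (α : Λ → ℝ) (θα : Λ → ℝ)
    (hθα : ∀ l, ∫ x, Real.exp (∑ l', θα l' * ψ l' x) * ψ l x ∂μ = α l)
    (f : E → ℝ) (hfmeas : Measurable f) (hfnn : ∀ x, 0 ≤ f x)
    (hfint : Integrable f μ)
    (hflog : Integrable (fun x => f x * |Real.log (f x)|) μ)
    (hfmom : ∀ l, ∫ x, f x * ψ l x ∂μ = α l)
    (θ : Λ → ℝ) :
    ∫ x, (f x * Real.log (f x / Real.exp (∑ l, θ l * ψ l x)) - f x +
        Real.exp (∑ l, θ l * ψ l x)) ∂μ =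
      (∫ x, (f x * Real.log (f x / Real.exp (∑ l, θα l * ψ l x)) - f x +
        Real.exp (∑ l, θα l * ψ l x)) ∂μ) +
      ∫ x, (Real.exp (∑ l, θα l * ψ l x) *
          Real.log (Real.exp (∑ l, θα l * ψ l x) / Real.exp (∑ l, θ l * ψ l x)) -
          Real.exp (∑ l, θα l * ψ l x) + Real.exp (∑ l, θ l * ψ l x)) ∂μ := by
  -- measurability of linear combinations
  have hSm : ∀ c : Λ → ℝ, Measurable (fun x => ∑ l, c l * ψ l x) := fun c =>
    Finset.measurable_sum _ fun l _ => (hmeas l).const_mul _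
  -- boundedness of linear combinations
  have hSb : ∀ c : Λ → ℝ, ∃ C : ℝ, ∀ x, |∑ l, c l * ψ l x| ≤ C := by
    intro c
    choose C hC using hbdd
    refine ⟨∑ l, |c l| * C l, fun x => ?_⟩
    calc |∑ l, c l * ψ l x| ≤ ∑ l, |c l * ψ l x| := Finset.abs_sum_le_sum_abs _ _
      _ ≤ ∑ l, |c l| * C l := Finset.sum_le_sum fun l _ => by
          rw [abs_mul]; exact mul_le_mul_of_nonneg_left (hC l x) (abs_nonneg _)
  -- integrability of exp of linear combination
  have hexpInt : ∀ c : Λ → ℝ, Integrable (fun x => Real.exp (∑ l, c l * ψ l x)) μ := by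
    intro c
    obtain ⟨C, hC⟩ := hSb c
    refine (integrable_const (Real.exp C)).mono'
      ((Real.measurable_exp.comp (hSm c)).aestronglyMeasurable) (ae_of_all _ fun x => ?_)
    rw [Real.norm_eq_abs, abs_of_pos (Real.exp_pos _)]
    exact Real.exp_le_exp.mpr ((abs_le.mp (hC x)).2)
  -- integrability of exp * ψ
  have hexpψInt : ∀ (c : Λ → ℝ) (l : Λ),
      Integrable (fun x => Real.exp (∑ l', c l' * ψ l' x) * ψ l x) μ := by
    intro c l
    obtain ⟨Cl, hCl⟩ := hbdd l
    have h := (hexpInt c).bdd_mul ((hmeas l).aestronglyMeasurable)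
      (c := Cl) (ae_of_all _ fun x => by rw [Real.norm_eq_abs]; exact hCl x)
    exact h.congr (ae_of_all _ fun x => mul_comm _ _)
  -- integrability of f * ψ
  have hfψInt : ∀ l : Λ, Integrable (fun x => f x * ψ l x) μ := by
    intro l
    obtain ⟨Cl, hCl⟩ := hbdd l
    have h := hfint.bdd_mul ((hmeas l).aestronglyMeasurable)
      (c := Cl) (ae_of_all _ fun x => by rw [Real.norm_eq_abs]; exact hCl x)
    exact h.congr (ae_of_all _ fun x => mul_comm _ _)
  -- integrability of g * (linear combination)
  have hmulSInt : ∀ (g : E → ℝ), (∀ l, Integrable (fun x => g x * ψ l x) μ) →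
      ∀ c : Λ → ℝ, Integrable (fun x => g x * ∑ l, c l * ψ l x) μ := by
    intro g hg c
    have heq : (fun x => g x * ∑ l, c l * ψ l x) = fun x => ∑ l, c l * (g x * ψ l x) := by
      funext x
      rw [Finset.mul_sum]
      exact Finset.sum_congr rfl fun l _ => by ring
    rw [heq]
    exact integrable_finset_sum _ fun l _ => (hg l).const_mul _
  -- value of ∫ g * (linear combination)
  have hgS : ∀ (g : E → ℝ), (∀ l, Integrable (fun x => g x * ψ l x) μ) →
      ∀ c : Λ → ℝ, ∫ x, g x * ∑ l, c l * ψ l x ∂μ = ∑ l, c l * ∫ x, g x * ψ l x ∂μ := by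
    intro g hg c
    have heq : (fun x => g x * ∑ l, c l * ψ l x) = fun x => ∑ l, c l * (g x * ψ l x) := by
      funext x
      rw [Finset.mul_sum]
      exact Finset.sum_congr rfl fun l _ => by ring
    rw [heq, integral_finset_sum _ fun l _ => (hg l).const_mul _]
    exact Finset.sum_congr rfl fun l _ => integral_const_mul _ _
  -- integrability of f * log f
  have hA : Integrable (fun x => f x * Real.log (f x)) μ := by
    refine hflog.mono'
      ((hfmeas.mul (Real.measurable_log.comp hfmeas)).aestronglyMeasurable)
      (ae_of_all _ fun x => ?_)
    rw [Real.norm_eq_abs, abs_mul, abs_of_nonneg (hfnn x)]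
  -- pointwise rewriting of f * log (f / exp S)
  have hlogf : ∀ (c : Λ → ℝ) (x : E),
      f x * Real.log (f x / Real.exp (∑ l, c l * ψ l x)) =
        f x * Real.log (f x) - f x * (∑ l, c l * ψ l x) := by
    intro c x
    rcases eq_or_lt_of_le (hfnn x) with h | h
    · simp [← h]
    · rw [Real.log_div (ne_of_gt h) (Real.exp_ne_zero _), Real.log_exp]; ring
  -- pointwise rewriting of exp Sα * log (exp Sα / exp S)
  have hlogexp : ∀ x : E,
      Real.exp (∑ l, θα l * ψ l x) *
          Real.log (Real.exp (∑ l, θα l * ψ l x) / Real.exp (∑ l, θ l * ψ l x)) =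
        Real.exp (∑ l, θα l * ψ l x) * (∑ l, θα l * ψ l x) -
          Real.exp (∑ l, θα l * ψ l x) * (∑ l, θ l * ψ l x) := by
    intro x
    rw [Real.log_div (Real.exp_ne_zero _) (Real.exp_ne_zero _), Real.log_exp, Real.log_exp]
    ring
  -- rewrite the three integrands
  have e1 : (fun x => f x * Real.log (f x / Real.exp (∑ l, θ l * ψ l x)) - f x +
        Real.exp (∑ l, θ l * ψ l x)) =
      fun x => (f x * Real.log (f x) - f x * (∑ l, θ l * ψ l x)) - f x +
        Real.exp (∑ l, θ l * ψ l x) := funext fun x => by rw [hlogf θ x]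
  have e2 : (fun x => f x * Real.log (f x / Real.exp (∑ l, θα l * ψ l x)) - f x +
        Real.exp (∑ l, θα l * ψ l x)) =
      fun x => (f x * Real.log (f x) - f x * (∑ l, θα l * ψ l x)) - f x +
        Real.exp (∑ l, θα l * ψ l x) := funext fun x => by rw [hlogf θα x]
  have e3 : (fun x => Real.exp (∑ l, θα l * ψ l x) *
          Real.log (Real.exp (∑ l, θα l * ψ l x) / Real.exp (∑ l, θ l * ψ l x)) -
          Real.exp (∑ l, θα l * ψ l x) + Real.exp (∑ l, θ l * ψ l x)) =
      fun x => (Real.exp (∑ l, θα l * ψ l x) * (∑ l, θα l * ψ l x) -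
          Real.exp (∑ l, θα l * ψ l x) * (∑ l, θ l * ψ l x)) -
          Real.exp (∑ l, θα l * ψ l x) + Real.exp (∑ l, θ l * ψ l x) :=
    funext fun x => by rw [hlogexp x]
  rw [e1, e2, e3]
  have hBθ := hmulSInt f hfψInt θ
  have hBθα := hmulSInt f hfψInt θα
  have hDθ := hmulSInt (fun x => Real.exp (∑ l', θα l' * ψ l' x)) (hexpψInt θα) θ
  have hDθα := hmulSInt (fun x => Real.exp (∑ l', θα l' * ψ l' x)) (hexpψInt θα) θα
  have i1 : Integrable (fun x => f x * Real.log (f x) - f x * ∑ l, θ l * ψ l x) μ :=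
    hA.sub hBθ
  have i2 : Integrable (fun x => f x * Real.log (f x) - f x * ∑ l, θ l * ψ l x - f x) μ :=
    i1.sub hfint
  have i3 : Integrable (fun x => f x * Real.log (f x) - f x * ∑ l, θα l * ψ l x) μ :=
    hA.sub hBθα
  have i4 : Integrable (fun x => f x * Real.log (f x) - f x * ∑ l, θα l * ψ l x - f x) μ :=
    i3.sub hfint
  have i5 : Integrable (fun x => Real.exp (∑ l', θα l' * ψ l' x) * ∑ l, θα l * ψ l x -
      Real.exp (∑ l', θα l' * ψ l' x) * ∑ l, θ l * ψ l x) μ := hDθα.sub hDθ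
  have i6 : Integrable (fun x => Real.exp (∑ l', θα l' * ψ l' x) * ∑ l, θα l * ψ l x -
      Real.exp (∑ l', θα l' * ψ l' x) * ∑ l, θ l * ψ l x -
      Real.exp (∑ l', θα l' * ψ l' x)) μ := i5.sub (hexpInt θα)
  rw [integral_add i2 (hexpInt θ), integral_sub i1 hfint, integral_sub hA hBθ,
      integral_add i4 (hexpInt θα), integral_sub i3 hfint, integral_sub hA hBθα,
      integral_add i6 (hexpInt θ), integral_sub i5 (hexpInt θα),
      integral_sub hDθα hDθ,
      hgS f hfψInt θ, hgS f hfψInt θα,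
      hgS _ (hexpψInt θα) θ, hgS _ (hexpψInt θα) θα]
  simp only [hfmom, hθα]
  ring
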